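/- Let 1 < p < r and λ₁ > 0, and suppose Λ : (1,p) → ℝ satisfies, for each q ∈ (1,p), the bounds λ₁^((r−q)/(r−p))·(r−p)·((p−q)^(p−q)/(r−q)^(r−q))^(1/(r−p))·c(q)^(q−p) ≤ Λ(q) ≤ λ₁^((r−q)/(r−p))·(r−p)·((p−q)^(p−q)/(r−q)^(r−q))^(1/(r−p)), where c : (1,p) → (0,∞) satisfies c(q)^(p−q) → 1 as q → p⁻. Then Λ(q) → λ₁ as q → p⁻. -/

import Mathlib

open Real Set Filter Topology

theorem threshold_tendsto (p r lam1 : ℝ) (hp : 1 < p) (hpr : p < r) (hlam : 0 < lam1)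
    (Λ c : ℝ → ℝ) (hc : ∀ q ∈ Ioo (1:ℝ) p, 0 < c q)
    (hclim : Tendsto (fun q : ℝ => c q ^ (p - q)) (nhdsWithin p (Ioo 1 p)) (nhds 1))
    (hlow : ∀ q ∈ Ioo (1:ℝ) p,
      lam1 ^ ((r - q) / (r - p)) * (r - p)
          * ((p - q) ^ (p - q) / (r - q) ^ (r - q)) ^ ((1:ℝ) / (r - p)) * c q ^ (q - p)
        ≤ Λ q)
    (hhigh : ∀ q ∈ Ioo (1:ℝ) p,
      Λ q ≤ lam1 ^ ((r - q) / (r - p)) * (r - p)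
          * ((p - q) ^ (p - q) / (r - q) ^ (r - q)) ^ ((1:ℝ) / (r - p))) :
    Tendsto Λ (nhdsWithin p (Ioo 1 p)) (nhds lam1) := by
  set l := nhdsWithin p (Ioo (1:ℝ) p) with hl
  have hrp : (0:ℝ) < r - p := by linarith
  have hid : Tendsto (fun q : ℝ => q) l (nhds p) := tendsto_nhdsWithin_of_tendsto_nhds tendsto_id
  -- lam1 ^ ((r-q)/(r-p)) → lam1
  have h1 : Tendsto (fun q : ℝ => lam1 ^ ((r - q) / (r - p))) l (nhds lam1) := by
    have hexp : Tendsto (fun q : ℝ => (r - q) / (r - p)) l (nhds 1) := by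
      have : Tendsto (fun q : ℝ => (r - q) / (r - p)) l (nhds ((r - p) / (r - p))) :=
        ((tendsto_const_nhds.sub hid).div_const _)
      simpa [div_self hrp.ne'] using this
    have := (tendsto_const_nhds (x := lam1) (f := l)).rpow hexp (Or.inl hlam.ne')
    simpa using this
  -- (p-q)^(p-q) → 1
  have h2 : Tendsto (fun q : ℝ => (p - q) ^ (p - q)) l (nhds 1) := by
    have hsub : Tendsto (fun q : ℝ => p - q) l (nhds 0) := by
      have := tendsto_const_nhds (x := p) (f := l) |>.sub hid
      simpa using this
    have hml : Tendsto (fun q : ℝ => (p - q) * Real.log (p - q)) l (nhds 0) := by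
      have := (Real.continuous_mul_log.tendsto 0).comp hsub
      simpa [Function.comp_def] using this
    have hexp : Tendsto (fun q : ℝ => Real.exp ((p - q) * Real.log (p - q))) l (nhds 1) := by
      have := (Real.continuous_exp.tendsto 0).comp hml
      simpa [Function.comp_def] using this
    refine hexp.congr' ?_
    filter_upwards [self_mem_nhdsWithin] with q hq
    rw [Real.rpow_def_of_pos (by linarith [hq.2] : (0:ℝ) < p - q)]
    ring_nf
  -- (r-q)^(r-q) → (r-p)^(r-p)
  have h3 : Tendsto (fun q : ℝ => (r - q) ^ (r - q)) l (nhds ((r - p) ^ (r - p))) := by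
    have hsub : Tendsto (fun q : ℝ => r - q) l (nhds (r - p)) :=
      tendsto_const_nhds.sub hid
    exact hsub.rpow hsub (Or.inl hrp.ne')
  have hrprp : (0:ℝ) < (r - p) ^ (r - p) := Real.rpow_pos_of_pos hrp _
  -- the quotient part raised to 1/(r-p) → (r-p)⁻¹
  have h4 : Tendsto (fun q : ℝ => ((p - q) ^ (p - q) / (r - q) ^ (r - q)) ^ ((1:ℝ) / (r - p)))
      l (nhds ((r - p)⁻¹)) := by
    have hq : Tendsto (fun q : ℝ => (p - q) ^ (p - q) / (r - q) ^ (r - q)) l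
        (nhds (1 / (r - p) ^ (r - p))) := h2.div h3 hrprp.ne'
    have := hq.rpow (tendsto_const_nhds (x := (1:ℝ)/(r-p))) (Or.inl (by positivity))
    have heq : ((1:ℝ) / (r - p) ^ (r - p)) ^ ((1:ℝ) / (r - p)) = (r - p)⁻¹ := by
      rw [one_div, ← Real.rpow_neg_one ((r - p) ^ (r - p)),
        ← Real.rpow_mul hrp.le, ← Real.rpow_mul hrp.le,
        show (r - p) * (-1) * (1 / (r - p)) = -1 by field_simp]
      exact Real.rpow_neg_one _
    rwa [heq] at this
  -- upper bound function tends to lam1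
  have hF : Tendsto (fun q : ℝ => lam1 ^ ((r - q) / (r - p)) * (r - p)
      * ((p - q) ^ (p - q) / (r - q) ^ (r - q)) ^ ((1:ℝ) / (r - p))) l (nhds lam1) := by
    have := (h1.mul_const (r - p)).mul h4
    have heq : lam1 * (r - p) * (r - p)⁻¹ = lam1 := by field_simp
    rwa [heq] at this
  -- c q ^ (q - p) → 1
  have hcinv : Tendsto (fun q : ℝ => c q ^ (q - p)) l (nhds 1) := by
    have := (hclim.inv₀ one_ne_zero)
    refine (by simpa using this : Tendsto (fun q : ℝ => (c q ^ (p - q))⁻¹) l (nhds 1)).congr' ?_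
    filter_upwards [self_mem_nhdsWithin] with q hq
    rw [← Real.rpow_neg (hc q hq).le, neg_sub]
  have hG : Tendsto (fun q : ℝ => lam1 ^ ((r - q) / (r - p)) * (r - p)
      * ((p - q) ^ (p - q) / (r - q) ^ (r - q)) ^ ((1:ℝ) / (r - p)) * c q ^ (q - p))
      l (nhds lam1) := by
    have := hF.mul hcinv
    simpa using this
  exact tendsto_of_tendsto_of_tendsto_of_le_of_le' hG hF
    (eventually_nhdsWithin_of_forall hlow) (eventually_nhdsWithin_of_forall hhigh)
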